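/- Let G* be the infimum of J(w, b, d) over all tuples consisting of (w, b), d : I_u → {−1, 1}, a partition C of I_l into nonempty label-pure clusters, and a partition D of I_u into nonempty clusters on which d is constant, subject to: each cluster of C is contained in I⁺_{(w,b)} or in I⁻_{(w,b)}, and each cluster of D is contained in one of I⁺⁺_{(w,b,d)}, I⁺⁻_{(w,b,d)}, I⁻⁺_{(w,b,d)}, I⁻⁻_{(w,b,d)}. Let H* be the infimum, over the same constrained tuples (with d constant equal to d_k on each D_k), of the weighted aggregated objective (1/2)‖w‖² + M_l * Σ_k |C_k| * max(0, 1 − ŷ_k * (⟪w, x̄_{C_k}⟫ + b)) + M_u * Σ_k |D_k| * max(0, 1 − d_k * (⟪w, x̄_{D_k}⟫ + b)), where ŷ_k is the common label on C_k and x̄_T = (Σ_{i∈T} x i)/|T|. Then G* = H*. -/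

import Mathlib

open Finset
open scoped RealInnerProductSpace

noncomputable section

/-- The cluster of index `k` within the index set `S`. -/
def clusterIn {n K : ℕ} (S : Finset (Fin n)) (c : Fin n → Fin K) (k : Fin K) :
    Finset (Fin n) :=
  S.filter fun i => c i = k

/-- Centroid of a finite set of data points. -/
def centroidOf {n m : ℕ} (x : Fin n → EuclideanSpace ℝ (Fin m))
    (S : Finset (Fin n)) : EuclideanSpace ℝ (Fin m) :=
  (S.card : ℝ)⁻¹ • ∑ i ∈ S, x i

/-- The semi-supervised SVM (S³VM) objective. -/
def s3J {n m : ℕ} (x : Fin n → EuclideanSpace ℝ (Fin m)) (y : Fin n → ℝ)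
    (Il : Finset (Fin n)) (Ml Mu : ℝ)
    (w : EuclideanSpace ℝ (Fin m)) (b : ℝ) (d : Fin n → ℝ) : ℝ :=
  (1 / 2) * ‖w‖ ^ 2
    + Ml * ∑ i ∈ Il, max 0 (1 - y i * (⟪w, x i⟫ + b))
    + Mu * ∑ i ∈ Ilᶜ, max 0 (1 - d i * (⟪w, x i⟫ + b))

/-- The weighted aggregated S³VM objective. -/
def s3H {n m Kl Ku : ℕ} (x : Fin n → EuclideanSpace ℝ (Fin m))
    (Il : Finset (Fin n)) (Ml Mu : ℝ)
    (cl : Fin n → Fin Kl) (yhat : Fin Kl → ℝ) (cu : Fin n → Fin Ku)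
    (w : EuclideanSpace ℝ (Fin m)) (b : ℝ) (d : Fin Ku → ℝ) : ℝ :=
  (1 / 2) * ‖w‖ ^ 2
    + Ml * ∑ k, ((clusterIn Il cl k).card : ℝ) *
        max 0 (1 - yhat k * (⟪w, centroidOf x (clusterIn Il cl k)⟫ + b))
    + Mu * ∑ k, ((clusterIn Ilᶜ cu k).card : ℝ) *
        max 0 (1 - d k * (⟪w, centroidOf x (clusterIn Ilᶜ cu k)⟫ + b))

/-- The side constraints on a tuple `(w, b, d, cl, yhat, cu, du)`: the clusters
of labeled entries are nonempty and label-pure with common labels `yhat`, each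
contained in `I⁺` or `I⁻`; the clusters of unlabeled entries are nonempty with
constant decision labels `du`, each contained in one of `I⁺⁺`, `I⁺⁻`, `I⁻⁺`,
`I⁻⁻`. -/
def s3Constraint {n m Kl Ku : ℕ} (x : Fin n → EuclideanSpace ℝ (Fin m))
    (y : Fin n → ℝ) (Il : Finset (Fin n))
    (w : EuclideanSpace ℝ (Fin m)) (b : ℝ) (d : Fin n → ℝ)
    (cl : Fin n → Fin Kl) (yhat : Fin Kl → ℝ)
    (cu : Fin n → Fin Ku) (du : Fin Ku → ℝ) : Prop :=
  (∀ i ∈ Ilᶜ, d i = 1 ∨ d i = -1) ∧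
  (∀ k, (clusterIn Il cl k).Nonempty) ∧
  (∀ i ∈ Il, yhat (cl i) = y i) ∧
  (∀ k, (clusterIn Ilᶜ cu k).Nonempty) ∧
  (∀ i ∈ Ilᶜ, du (cu i) = d i) ∧
  (∀ k,
    (∀ i ∈ clusterIn Il cl k, 0 < 1 - y i * (⟪w, x i⟫ + b)) ∨
    (∀ i ∈ clusterIn Il cl k, 1 - y i * (⟪w, x i⟫ + b) ≤ 0)) ∧
  (∀ k,
    (∀ i ∈ clusterIn Ilᶜ cu k,
        0 < 1 - d i * (⟪w, x i⟫ + b) ∧ 0 < ⟪w, x i⟫ + b) ∨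
    (∀ i ∈ clusterIn Ilᶜ cu k,
        0 < 1 - d i * (⟪w, x i⟫ + b) ∧ ⟪w, x i⟫ + b ≤ 0) ∨
    (∀ i ∈ clusterIn Ilᶜ cu k,
        1 - d i * (⟪w, x i⟫ + b) ≤ 0 ∧ 0 < ⟪w, x i⟫ + b) ∨
    (∀ i ∈ clusterIn Ilᶜ cu k,
        1 - d i * (⟪w, x i⟫ + b) ≤ 0 ∧ ⟪w, x i⟫ + b ≤ 0))


lemma agg_sum {ι : Type*} (T : Finset ι) (hT : T.Nonempty) (g : ι → ℝ) (G : ℝ)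
    (hG : ∑ i ∈ T, g i = T.card * G)
    (h : (∀ i ∈ T, 0 < g i) ∨ (∀ i ∈ T, g i ≤ 0)) :
    ∑ i ∈ T, max 0 (g i) = T.card * max 0 G := by
  have hcard : (0:ℝ) < T.card := by exact_mod_cast Finset.card_pos.mpr hT
  rcases h with h | h
  · have h1 : ∑ i ∈ T, max 0 (g i) = ∑ i ∈ T, g i :=
      Finset.sum_congr rfl fun i hi => max_eq_right (h i hi).le
    have h2 : 0 < ∑ i ∈ T, g i :=
      Finset.sum_pos h hT
    have hGpos : 0 < G := by
      by_contra hc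
      push_neg at hc
      nlinarith [hG]
    rw [h1, hG, max_eq_right hGpos.le]
  · have h1 : ∑ i ∈ T, max 0 (g i) = 0 :=
      Finset.sum_eq_zero fun i hi => max_eq_left (h i hi)
    have h2 : ∑ i ∈ T, g i ≤ 0 :=
      Finset.sum_nonpos h
    have hGle : G ≤ 0 := by nlinarith [hG]
    rw [h1, max_eq_left hGle, mul_zero]

lemma inner_centroid {n m : ℕ} (x : Fin n → EuclideanSpace ℝ (Fin m))
    (T : Finset (Fin n)) (w : EuclideanSpace ℝ (Fin m)) :
    ⟪w, centroidOf x T⟫ = (T.card : ℝ)⁻¹ * ∑ i ∈ T, ⟪w, x i⟫ := by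
  simp [centroidOf, inner_smul_right, inner_sum]

lemma cluster_eq {n m : ℕ} (x : Fin n → EuclideanSpace ℝ (Fin m))
    (T : Finset (Fin n)) (hT : T.Nonempty) (w : EuclideanSpace ℝ (Fin m)) (b : ℝ)
    (yv : Fin n → ℝ) (yh : ℝ) (hy : ∀ i ∈ T, yv i = yh)
    (h : (∀ i ∈ T, 0 < 1 - yv i * (⟪w, x i⟫ + b)) ∨
         (∀ i ∈ T, 1 - yv i * (⟪w, x i⟫ + b) ≤ 0)) :
    ∑ i ∈ T, max 0 (1 - yv i * (⟪w, x i⟫ + b))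
      = T.card * max 0 (1 - yh * (⟪w, centroidOf x T⟫ + b)) := by
  have hcard : (0:ℝ) < T.card := by exact_mod_cast Finset.card_pos.mpr hT
  apply agg_sum T hT _ _ _ h
  have key : ∀ i ∈ T, 1 - yv i * (⟪w, x i⟫ + b) = 1 - yh * (⟪w, x i⟫ + b) := by
    intro i hi; rw [hy i hi]
  rw [Finset.sum_congr rfl key, inner_centroid]
  have : ∑ i ∈ T, (1 - yh * (⟪w, x i⟫ + b))
      = T.card - yh * ((∑ i ∈ T, ⟪w, x i⟫) + T.card * b) := by
    rw [Finset.sum_sub_distrib, Finset.sum_const, ← Finset.mul_sum,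
      Finset.sum_add_distrib, Finset.sum_const]
    push_cast; ring
  rw [this]
  field_simp

lemma J_eq_H {n m Kl Ku : ℕ} (x : Fin n → EuclideanSpace ℝ (Fin m)) (y : Fin n → ℝ)
    (Il : Finset (Fin n)) (Ml Mu : ℝ)
    (w : EuclideanSpace ℝ (Fin m)) (b : ℝ) (d : Fin n → ℝ)
    (cl : Fin n → Fin Kl) (yhat : Fin Kl → ℝ)
    (cu : Fin n → Fin Ku) (du : Fin Ku → ℝ)
    (hc : s3Constraint x y Il w b d cl yhat cu du) :
    s3J x y Il Ml Mu w b d = s3H x Il Ml Mu cl yhat cu w b du := by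
  obtain ⟨_, hclne, hyhat, hcune, hdu, hlcase, hucase⟩ := hc
  unfold s3J s3H
  have hL : ∑ i ∈ Il, max 0 (1 - y i * (⟪w, x i⟫ + b))
      = ∑ k, ((clusterIn Il cl k).card : ℝ) *
          max 0 (1 - yhat k * (⟪w, centroidOf x (clusterIn Il cl k)⟫ + b)) := by
    rw [← Finset.sum_fiberwise Il cl (fun i => max 0 (1 - y i * (⟪w, x i⟫ + b)))]
    refine Finset.sum_congr rfl fun k _ => ?_
    refine cluster_eq x _ (hclne k) w b y (yhat k) ?_ (hlcase k)
    intro i hi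
    simp only [clusterIn, Finset.mem_filter] at hi
    rw [← hi.2, hyhat i hi.1]
  have hU : ∑ i ∈ Ilᶜ, max 0 (1 - d i * (⟪w, x i⟫ + b))
      = ∑ k, ((clusterIn Ilᶜ cu k).card : ℝ) *
          max 0 (1 - du k * (⟪w, centroidOf x (clusterIn Ilᶜ cu k)⟫ + b)) := by
    rw [← Finset.sum_fiberwise Ilᶜ cu (fun i => max 0 (1 - d i * (⟪w, x i⟫ + b)))]
    refine Finset.sum_congr rfl fun k _ => ?_
    refine cluster_eq x _ (hcune k) w b d (du k) ?_ ?_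
    · intro i hi
      simp only [clusterIn, Finset.mem_filter] at hi
      rw [← hi.2, hdu i hi.1]
    · rcases hucase k with h | h | h | h
      · exact Or.inl fun i hi => (h i hi).1
      · exact Or.inl fun i hi => (h i hi).1
      · exact Or.inr fun i hi => (h i hi).1
      · exact Or.inr fun i hi => (h i hi).1
  rw [hL, hU]

/-- Over the constrained tuples, the optimal value `G*` of the original S³VM
objective equals the optimal value `H*` of the weighted aggregated
objective. -/
theorem s3vm_Gstar_eq_Hstar (n m : ℕ)
    (x : Fin n → EuclideanSpace ℝ (Fin m)) (y : Fin n → ℝ)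
    (Il : Finset (Fin n)) (hy : ∀ i ∈ Il, y i = 1 ∨ y i = -1)
    (Ml Mu : ℝ) (hMl : 0 < Ml) (hMu : 0 < Mu) :
    sInf {r : ℝ | ∃ (w : EuclideanSpace ℝ (Fin m)) (b : ℝ) (d : Fin n → ℝ)
        (Kl : ℕ) (cl : Fin n → Fin Kl) (yhat : Fin Kl → ℝ)
        (Ku : ℕ) (cu : Fin n → Fin Ku) (du : Fin Ku → ℝ),
        s3Constraint x y Il w b d cl yhat cu du ∧
        r = s3J x y Il Ml Mu w b d} =
    sInf {r : ℝ | ∃ (w : EuclideanSpace ℝ (Fin m)) (b : ℝ) (d : Fin n → ℝ)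
        (Kl : ℕ) (cl : Fin n → Fin Kl) (yhat : Fin Kl → ℝ)
        (Ku : ℕ) (cu : Fin n → Fin Ku) (du : Fin Ku → ℝ),
        s3Constraint x y Il w b d cl yhat cu du ∧
        r = s3H x Il Ml Mu cl yhat cu w b du} := by
  congr 1
  ext r
  simp only [Set.mem_setOf_eq]
  constructor
  · rintro ⟨w, b, d, Kl, cl, yhat, Ku, cu, du, hc, rfl⟩
    exact ⟨w, b, d, Kl, cl, yhat, Ku, cu, du, hc,
      J_eq_H x y Il Ml Mu w b d cl yhat cu du hc⟩
  · rintro ⟨w, b, d, Kl, cl, yhat, Ku, cu, du, hc, rfl⟩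
    exact ⟨w, b, d, Kl, cl, yhat, Ku, cu, du, hc,
      (J_eq_H x y Il Ml Mu w b d cl yhat cu du hc).symm⟩

end
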